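/- The constant J̃(α) = 1/(2α+1) − 2/(α+1) + 1 satisfies J̃(α)/J(α,0,b_FWD) → 1 as α ↓ −1/2, where J(α,0,b_FWD) = Σ_{k=1}^∞ ∫_{k−1}^k (y^α − k^α)² dy. Equivalently, J̃(α) equals the k = 1 term of J(α,0,b_FWD), and this term dominates the series as α ↓ −1/2 (both quantities tend to ∞ while the remaining terms of the series stay bounded). -/

import Mathlib

open Real Filter Set

/-- The truncation-error constant `J̃(α)`. -/
noncomputable def Jtilde (α : ℝ) : ℝ := 1 / (2 * α + 1) - 2 / (α + 1) + 1

/-- The asymptotic MSE constant of the forward Riemann-sum scheme,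
`J(α,0,b_FWD) = Σ_{k=1}^∞ ∫_{k-1}^k (y^α − k^α)² dy` (indexed here by `k = i+1`). -/
noncomputable def JFWD (α : ℝ) : ℝ :=
  ∑' i : ℕ, ∫ y in (i : ℝ)..((i : ℝ) + 1), (y ^ α - ((i : ℝ) + 1) ^ α) ^ 2

namespace JtildeAux

/-- The first-term identity. -/
lemma first_term (α : ℝ) (hα : α ∈ Set.Ioo (-(1/2) : ℝ) 0) :
    Jtilde α = ∫ y in (0 : ℝ)..1, (y ^ α - 1) ^ 2 := by
  obtain ⟨h1, h2⟩ := hα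
  have h2α : (-1 : ℝ) < 2 * α := by linarith
  have hαm : (-1 : ℝ) < α := by linarith
  have key : ∀ y ∈ Set.uIcc (0:ℝ) 1,
      (y ^ α - 1) ^ 2 = y ^ (2 * α) - 2 * y ^ α + 1 := by
    intro y hy
    rw [Set.uIcc_of_le (by norm_num : (0:ℝ) ≤ 1)] at hy
    rcases eq_or_lt_of_le hy.1 with h | h
    · rw [← h, Real.zero_rpow (by linarith), Real.zero_rpow (by linarith)]
      ring
    · have : y ^ (2 * α) = y ^ α * y ^ α := by
        rw [← Real.rpow_add h]; ring_nf
      rw [this]; ring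
  rw [intervalIntegral.integral_congr key]
  have i1 : IntervalIntegrable (fun y : ℝ => y ^ (2 * α)) MeasureTheory.volume 0 1 :=
    intervalIntegral.intervalIntegrable_rpow' h2α
  have i2 : IntervalIntegrable (fun y : ℝ => y ^ α) MeasureTheory.volume 0 1 :=
    intervalIntegral.intervalIntegrable_rpow' hαm
  have i2' : IntervalIntegrable (fun y : ℝ => 2 * y ^ α) MeasureTheory.volume 0 1 :=
    i2.const_mul 2
  have i3 : IntervalIntegrable (fun _ : ℝ => (1:ℝ)) MeasureTheory.volume 0 1 :=
    intervalIntegrable_const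
  rw [intervalIntegral.integral_add (i1.sub i2') i3,
    intervalIntegral.integral_sub i1 i2', intervalIntegral.integral_const_mul,
    integral_rpow (Or.inl h2α), integral_rpow (Or.inl hαm)]
  rw [Real.one_rpow, Real.one_rpow, Real.zero_rpow (by linarith),
    Real.zero_rpow (by linarith)]
  simp only [Jtilde, intervalIntegral.integral_const, smul_eq_mul]
  field_simp
  ring

/-- pointwise bound for the tail integrand and nonnegativity. -/
lemma tail_term_le (α : ℝ) (hα : α ∈ Set.Ioo (-(1/2) : ℝ) 0) (i : ℕ) :
    (∫ y in ((i : ℝ) + 1)..((i : ℝ) + 2), (y ^ α - ((i : ℝ) + 2) ^ α) ^ 2)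
      ≤ ((i : ℝ) + 1) ^ α - ((i : ℝ) + 2) ^ α := by
  obtain ⟨h1, h2⟩ := hα
  set a : ℝ := (i : ℝ) + 1
  set b : ℝ := (i : ℝ) + 2
  have ha0 : (0:ℝ) < a := by positivity
  have hab : a ≤ b := by unfold a b; linarith
  have ha1 : (1:ℝ) ≤ a := by unfold a; have := Nat.cast_nonneg (α := ℝ) i; linarith
  set d : ℝ := a ^ α - b ^ α
  have hd0 : 0 ≤ d := sub_nonneg.2 (Real.rpow_le_rpow_of_nonpos ha0 hab h2.le)
  have hd1 : d ≤ 1 := by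
    have : a ^ α ≤ 1 := Real.rpow_le_one_of_one_le_of_nonpos ha1 h2.le
    have hb : 0 ≤ b ^ α := Real.rpow_nonneg (by linarith) α
    simp only [d]; linarith
  have hcont : ContinuousOn (fun y : ℝ => (y ^ α - b ^ α) ^ 2) (Set.uIcc a b) := by
    apply ContinuousOn.pow
    apply ContinuousOn.sub _ continuousOn_const
    intro y hy
    rw [Set.uIcc_of_le hab] at hy
    exact (Real.continuousAt_rpow_const y α (Or.inl (by linarith [hy.1]))).continuousWithinAt
  have hint : IntervalIntegrable (fun y : ℝ => (y ^ α - b ^ α) ^ 2)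
      MeasureTheory.volume a b := hcont.intervalIntegrable
  have hb1 : (∫ y in a..b, (y ^ α - b ^ α) ^ 2) ≤ ∫ _y in a..b, d ^ 2 := by
    apply intervalIntegral.integral_mono_on hab hint intervalIntegrable_const
    intro y hy
    have hya : 0 ≤ y ^ α - b ^ α :=
      sub_nonneg.2 (Real.rpow_le_rpow_of_nonpos (by linarith [hy.1]) hy.2 h2.le)
    have hyd : y ^ α - b ^ α ≤ d := by
      have := Real.rpow_le_rpow_of_nonpos ha0 hy.1 h2.le
      simp only [d]; linarith
    exact pow_le_pow_left₀ hya hyd 2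
  have : (∫ _y in a..b, d ^ 2) = d ^ 2 := by
    rw [intervalIntegral.integral_const, smul_eq_mul]
    have : b - a = 1 := by unfold a b; ring
    rw [this, one_mul]
  rw [this] at hb1
  have : d ^ 2 ≤ d := by nlinarith
  linarith

lemma tail_nonneg (α : ℝ) (i : ℕ) :
    0 ≤ ∫ y in ((i : ℝ) + 1)..((i : ℝ) + 2), (y ^ α - ((i : ℝ) + 2) ^ α) ^ 2 := by
  apply intervalIntegral.integral_nonneg (by linarith)
  intro y _; positivity

lemma tail_partial_le (α : ℝ) (hα : α ∈ Set.Ioo (-(1/2) : ℝ) 0) (n : ℕ) :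
    ∑ i ∈ Finset.range n,
      (∫ y in ((i : ℝ) + 1)..((i : ℝ) + 2), (y ^ α - ((i : ℝ) + 2) ^ α) ^ 2) ≤ 1 := by
  have h := Finset.sum_range_sub' (fun i : ℕ => ((i : ℝ) + 1) ^ α) n
  have hle : ∑ i ∈ Finset.range n,
      (∫ y in ((i : ℝ) + 1)..((i : ℝ) + 2), (y ^ α - ((i : ℝ) + 2) ^ α) ^ 2)
      ≤ ∑ i ∈ Finset.range n, (((i : ℝ) + 1) ^ α - (((i:ℕ)+1 : ℕ) + 1 : ℝ) ^ α) := by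
    apply Finset.sum_le_sum
    intro i _
    have := tail_term_le α hα i
    convert this using 3
    · rfl
    · push_cast; ring
  refine hle.trans ?_
  rw [h]
  have h0 : ((0:ℕ) : ℝ) + 1 = 1 := by norm_num
  rw [h0, Real.one_rpow]
  have : 0 ≤ (((n:ℕ) : ℝ) + 1) ^ α := Real.rpow_nonneg (by positivity) α
  linarith

/-- The tail sum is uniformly bounded by 1. -/
lemma tail_tsum_le (α : ℝ) (hα : α ∈ Set.Ioo (-(1/2) : ℝ) 0) :
    (∑' i : ℕ, ∫ y in ((i : ℝ) + 1)..((i : ℝ) + 2), (y ^ α - ((i : ℝ) + 2) ^ α) ^ 2) ≤ 1 :=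
  Real.tsum_le_of_sum_range_le (tail_nonneg α) (tail_partial_le α hα)

lemma tail_summable (α : ℝ) (hα : α ∈ Set.Ioo (-(1/2) : ℝ) 0) :
    Summable (fun i : ℕ =>
      ∫ y in ((i : ℝ) + 1)..((i : ℝ) + 2), (y ^ α - ((i : ℝ) + 2) ^ α) ^ 2) :=
  summable_of_sum_range_le (tail_nonneg α) (tail_partial_le α hα)

/-- JFWD splits into first term plus tail. -/
lemma JFWD_split (α : ℝ) (hα : α ∈ Set.Ioo (-(1/2) : ℝ) 0) :
    JFWD α = Jtilde α +
      ∑' i : ℕ, ∫ y in ((i : ℝ) + 1)..((i : ℝ) + 2), (y ^ α - ((i : ℝ) + 2) ^ α) ^ 2 := by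
  set F : ℕ → ℝ := fun i => ∫ y in (i : ℝ)..((i : ℝ) + 1), (y ^ α - ((i : ℝ) + 1) ^ α) ^ 2
  have hshift : (fun i : ℕ => F (i + 1)) = fun i : ℕ =>
      ∫ y in ((i : ℝ) + 1)..((i : ℝ) + 2), (y ^ α - ((i : ℝ) + 2) ^ α) ^ 2 := by
    funext i
    simp only [F]
    have h1 : ((i + 1 : ℕ) : ℝ) = (i : ℝ) + 1 := by push_cast; ring
    rw [h1, show (i : ℝ) + 1 + 1 = (i : ℝ) + 2 from by ring]
  have hs : Summable F := by
    rw [← summable_nat_add_iff 1]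
    rw [hshift]
    exact tail_summable α hα
  have h0 : F 0 = Jtilde α := by
    rw [first_term α hα]
    simp only [F, Nat.cast_zero, zero_add, Real.one_rpow]
  rw [JFWD, hs.tsum_eq_zero_add, h0, hshift]

lemma mem_filter : Set.Ioo (-(1/2) : ℝ) 0 ∈ nhdsWithin (-(1/2) : ℝ) (Set.Ioi (-(1/2))) :=
  Ioo_mem_nhdsGT_of_mem ⟨le_refl _, by norm_num⟩

lemma Jtilde_tendsto :
    Tendsto Jtilde (nhdsWithin (-(1/2) : ℝ) (Set.Ioi (-(1/2)))) atTop := by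
  have h1 : Tendsto (fun α : ℝ => 1 / (2 * α + 1))
      (nhdsWithin (-(1/2) : ℝ) (Set.Ioi (-(1/2)))) atTop := by
    simp only [one_div]
    apply tendsto_inv_nhdsGT_zero.comp
    apply tendsto_nhdsWithin_of_tendsto_nhds_of_eventually_within
    · have : Tendsto (fun α : ℝ => 2 * α + 1) (nhds (-(1/2))) (nhds (2 * (-(1/2)) + 1)) := by
        exact (tendsto_id.const_mul 2).add_const 1
      simpa using this.mono_left nhdsWithin_le_nhds
    · filter_upwards [self_mem_nhdsWithin] with α hα
      simp only [Set.mem_Ioi] at hα ⊢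
      linarith
  have h2 : Tendsto (fun α : ℝ => -(2 / (α + 1)) + 1)
      (nhdsWithin (-(1/2) : ℝ) (Set.Ioi (-(1/2)))) (nhds (-(2 / ((-(1/2)) + 1)) + 1)) := by
    apply Tendsto.mono_left _ nhdsWithin_le_nhds
    apply Tendsto.add_const
    apply Tendsto.neg
    apply Tendsto.div tendsto_const_nhds (tendsto_id.add_const 1)
    norm_num
  have := Filter.Tendsto.add_atTop h2 h1
  apply this.congr
  intro α; simp only [Jtilde]; ring

lemma JFWD_tendsto :
    Tendsto JFWD (nhdsWithin (-(1/2) : ℝ) (Set.Ioi (-(1/2)))) atTop := by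
  apply tendsto_atTop_mono' _ _ Jtilde_tendsto
  filter_upwards [mem_filter] with α hα
  rw [JFWD_split α hα]
  have : 0 ≤ ∑' i : ℕ, ∫ y in ((i : ℝ) + 1)..((i : ℝ) + 2), (y ^ α - ((i : ℝ) + 2) ^ α) ^ 2 :=
    tsum_nonneg (tail_nonneg α)
  linarith

lemma ratio_tendsto :
    Tendsto (fun α => Jtilde α / JFWD α)
      (nhdsWithin (-(1/2) : ℝ) (Set.Ioi (-(1/2)))) (nhds 1) := by
  set l := nhdsWithin (-(1/2) : ℝ) (Set.Ioi (-(1/2)))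
  set T : ℝ → ℝ := fun α =>
    ∑' i : ℕ, ∫ y in ((i : ℝ) + 1)..((i : ℝ) + 2), (y ^ α - ((i : ℝ) + 2) ^ α) ^ 2
  have hev : ∀ᶠ α in l, α ∈ Set.Ioo (-(1/2) : ℝ) 0 := mem_filter
  have hJbig : ∀ᶠ α in l, 1 < Jtilde α := Jtilde_tendsto.eventually_gt_atTop 1
  -- T/JFWD → 0
  have hTsq : Tendsto (fun α => T α / JFWD α) l (nhds 0) := by
    have hupper : Tendsto (fun α => (Jtilde α)⁻¹) l (nhds 0) :=
      Jtilde_tendsto.inv_tendsto_atTop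
    apply tendsto_of_tendsto_of_tendsto_of_le_of_le' tendsto_const_nhds hupper
    · filter_upwards [hev, hJbig] with α hα hJ
      have hT0 : 0 ≤ T α := tsum_nonneg (tail_nonneg α)
      have hJF : 0 < JFWD α := by
        rw [JFWD_split α hα]; linarith
      positivity
    · filter_upwards [hev, hJbig] with α hα hJ
      have hT0 : 0 ≤ T α := tsum_nonneg (tail_nonneg α)
      have hT1 : T α ≤ 1 := tail_tsum_le α hα
      have hJF : 0 < JFWD α := by rw [JFWD_split α hα]; linarith
      rw [div_le_iff₀ hJF, inv_mul_eq_div, le_div_iff₀ (by linarith)]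
      have : JFWD α = Jtilde α + T α := JFWD_split α hα
      nlinarith
  have heq : ∀ᶠ α in l, Jtilde α / JFWD α = 1 - T α / JFWD α := by
    filter_upwards [hev, hJbig] with α hα hJ
    have hT0 : 0 ≤ T α := tsum_nonneg (tail_nonneg α)
    have hJF : 0 < JFWD α := by rw [JFWD_split α hα]; linarith
    have hsplit : JFWD α = Jtilde α + T α := JFWD_split α hα
    field_simp
    linarith
  have : Tendsto (fun α => 1 - T α / JFWD α) l (nhds (1 - 0)) :=
    tendsto_const_nhds.sub hTsq
  rw [sub_zero] at this
  exact this.congr' (heq.mono fun α h => h.symm)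

end JtildeAux

theorem Jtilde_dominates_JFWD :
    (∀ α ∈ Set.Ioo (-(1/2) : ℝ) 0,
      Jtilde α = ∫ y in (0 : ℝ)..1, (y ^ α - 1) ^ 2) ∧
    Tendsto (fun α => Jtilde α / JFWD α) (nhdsWithin (-(1/2) : ℝ) (Set.Ioi (-(1/2)))) (nhds 1) ∧
    Tendsto Jtilde (nhdsWithin (-(1/2) : ℝ) (Set.Ioi (-(1/2)))) atTop ∧
    Tendsto JFWD (nhdsWithin (-(1/2) : ℝ) (Set.Ioi (-(1/2)))) atTop ∧
    (∃ C : ℝ, ∀ α ∈ Set.Ioo (-(1/2) : ℝ) 0,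
      (∑' i : ℕ, ∫ y in ((i : ℝ) + 1)..((i : ℝ) + 2), (y ^ α - ((i : ℝ) + 2) ^ α) ^ 2) ≤ C) := by
  exact ⟨JtildeAux.first_term, JtildeAux.ratio_tendsto, JtildeAux.Jtilde_tendsto,
    JtildeAux.JFWD_tendsto, ⟨1, JtildeAux.tail_tsum_le⟩⟩
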